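/- arXiv:2403.12476 — 4 statements merged into one kernel-verified Lean document; each statement's English description precedes it below -/
import Mathlib

section
/- Let 𝔬 be the ring of integers of a non-Archimedean local field F with uniformizer π. Let X and X' be n×n matrices over F which are the identity in the upper-left (n−2)×(n−2) block, have zero off-diagonal entries except the (n−1, n)-entry, with diagonal entries (1,…,1, π^{−l}, π^{−(b−l)}) and (1,…,1, π^{−l'}, π^{−(b−l')}) and (n−1,n)-entries π^{−l}x and π^{−l'}x' respectively. Then X'⁻¹X ∈ GL_n(𝔬) if and only if l = l' and x − x' ∈ 𝔬. -/
open Matrix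

/-- The `n×n` matrix which is the identity in the upper-left `(n−2)×(n−2)` block,
with last two diagonal entries `p`, `q`, `(n−1,n)`-entry `r`, and all other
entries zero. -/
def upperMat {F : Type*} [Field F] (n : ℕ) (p q r : F) :
    Matrix (Fin (n + 2)) (Fin (n + 2)) F := fun i j =>
  if i = j then (if (i : ℕ) = n then p else if (i : ℕ) = n + 1 then q else 1)
  else if (i : ℕ) = n ∧ (j : ℕ) = n + 1 then r else 0

section Aux

variable {F : Type*} [Field F] {n : ℕ}

def em0 (n : ℕ) : Fin (n + 2) := ⟨n, by omega⟩
def em1 (n : ℕ) : Fin (n + 2) := ⟨n + 1, by omega⟩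

lemma upperMat_mul_row (p q r : F) (B : Matrix (Fin (n+2)) (Fin (n+2)) F) (i j : Fin (n+2)) :
    (upperMat n p q r * B) i j =
      (if (i : ℕ) = n then p else if (i : ℕ) = n + 1 then q else 1) * B i j
        + (if (i : ℕ) = n then r * B (em1 n) j else 0) := by
  rw [Matrix.mul_apply]
  have key : ∀ k, upperMat n p q r i k * B k j =
      (if k = i then (if (i : ℕ) = n then p else if (i : ℕ) = n + 1 then q else 1) * B k j else 0)
        + (if (i : ℕ) = n ∧ k = em1 n then r * B k j else 0) := by
    intro k
    unfold upperMat
    rcases eq_or_ne i k with h | h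
    · subst h
      have h2 : ¬((i : ℕ) = n ∧ i = em1 n) := by
        rintro ⟨h1, h3⟩; rw [h3] at h1; simp [em1] at h1
      simp [h2]
    · have hk : k ≠ i := Ne.symm h
      have hcond : ((i : ℕ) = n ∧ (k : ℕ) = n + 1) ↔ ((i : ℕ) = n ∧ k = em1 n) := by
        simp [Fin.ext_iff, em1]
      simp only [if_neg h, if_neg hk, hcond, ite_mul, zero_mul, zero_add]
  rw [Finset.sum_congr rfl fun k _ => key k, Finset.sum_add_distrib,
    Finset.sum_ite_eq' Finset.univ i]
  simp only [Finset.mem_univ, if_true]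
  congr 1
  by_cases hi : (i : ℕ) = n
  · simp only [hi, true_and, if_true, Finset.sum_ite_eq' Finset.univ (em1 n),
      Finset.mem_univ, if_true]
  · simp [hi]

lemma upperMat_mul (p q r p' q' r' : F) :
    upperMat n p q r * upperMat n p' q' r' =
      upperMat n (p * p') (q * q') (p * r' + r * q') := by
  ext i j
  rw [upperMat_mul_row]
  unfold upperMat
  have hem1 : ((em1 n : Fin (n+2)) : ℕ) = n + 1 := rfl
  by_cases hi : (i : ℕ) = n
  · have hine1 : (i : ℕ) ≠ n + 1 := by omega
    have hie : i ≠ em1 n := by simp [Fin.ext_iff, hem1, hi]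
    have h10 : em1 n ≠ i := Ne.symm hie
    by_cases hij : i = j
    · subst hij
      simp [hi, hine1, h10, hem1]
    · by_cases hj : (j : ℕ) = n + 1
      · have hj' : em1 n = j := by simp [Fin.ext_iff, hem1, hj]
        subst hj'
        simp [hi, hij, hem1, hine1]
      · have hj'' : em1 n ≠ j := by simp [Fin.ext_iff, hem1]; omega
        simp [hi, hij, hj, hj'', hem1]
  · by_cases hij : i = j
    · subst hij
      simp only [hi, if_neg, if_pos rfl, if_false, add_zero, false_and]
      by_cases hi1 : (i : ℕ) = n + 1 <;> simp [hi, hi1]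
    · simp [hi, hij]

lemma upperMat_one : upperMat n (1 : F) 1 0 = 1 := by
  ext i j
  unfold upperMat
  by_cases h : i = j <;> simp [h, Matrix.one_apply]

lemma upperMat_inv {p q : F} (r : F) (hp : p ≠ 0) (hq : q ≠ 0) :
    (upperMat n p q r)⁻¹ = upperMat n p⁻¹ q⁻¹ (-(p⁻¹ * r * q⁻¹)) := by
  apply Matrix.inv_eq_right_inv
  rw [upperMat_mul, mul_inv_cancel₀ hp, mul_inv_cancel₀ hq]
  have : p * -(p⁻¹ * r * q⁻¹) + r * q⁻¹ = 0 := by field_simp; ring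
  rw [this, upperMat_one]

lemma upperMat_mem_iff (O : Subring F) (p q r : F) :
    (∀ i j, upperMat n p q r i j ∈ O) ↔ (p ∈ O ∧ q ∈ O ∧ r ∈ O) := by
  constructor
  · intro h
    refine ⟨?_, ?_, ?_⟩
    · have := h (em0 n) (em0 n); simpa [upperMat, em0] using this
    · have := h (em1 n) (em1 n)
      simpa [upperMat, em1, Fin.ext_iff] using this
    · have := h (em0 n) (em1 n)
      simpa [upperMat, em0, em1, Fin.ext_iff] using this
  · rintro ⟨hp, hq, hr⟩ i j
    unfold upperMat
    split_ifs <;> first | assumption | exact O.one_mem | exact O.zero_mem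

end Aux

/-- with `X`, `X'` the matrices with diagonal
`(1,…,1,π^{−l},π^{−(b−l)})`, resp. `(1,…,1,π^{−l'},π^{−(b−l')})`, and
`(n−1,n)`-entries `π^{−l}x`, resp. `π^{−l'}x'`, one has `X'⁻¹X ∈ GL_n(𝔬)` if and
only if `l = l'` and `x − x' ∈ 𝔬`. -/
theorem stmt7 {𝔬 : Type*} [CommRing 𝔬] [IsDomain 𝔬] [IsDiscreteValuationRing 𝔬]
    {F : Type*} [Field F] [Algebra 𝔬 F] [IsFractionRing 𝔬 F]
    (π : 𝔬) (hπ : Irreducible π) (πF : F) (hπF : πF = algebraMap 𝔬 F π)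
    (O : Subring F) (hO : (O : Set F) = Set.range (algebraMap 𝔬 F))
    (n : ℕ) (b l l' : ℕ) (hl : l ≤ b) (hl' : l' ≤ b) (x x' : F)
    (X X' : Matrix (Fin (n + 2)) (Fin (n + 2)) F)
    (hX : X = upperMat n (πF ^ (-(l : ℤ))) (πF ^ (-((b : ℤ) - l))) (πF ^ (-(l : ℤ)) * x))
    (hX' : X' = upperMat n (πF ^ (-(l' : ℤ))) (πF ^ (-((b : ℤ) - l'))) (πF ^ (-(l' : ℤ)) * x')) :
    ((∀ i j, (X'⁻¹ * X) i j ∈ O) ∧ (∀ i j, (X'⁻¹ * X)⁻¹ i j ∈ O))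
      ↔ (l = l' ∧ x - x' ∈ O) := by
  have hπ0 : πF ≠ 0 := by
    rw [hπF]
    exact (map_ne_zero_iff _ (IsFractionRing.injective 𝔬 F)).mpr hπ.ne_zero
  have hzpow : ∀ s t : ℤ, πF ^ s * πF ^ t = πF ^ (s + t) := fun s t => (zpow_add₀ hπ0 s t).symm
  have hmem : ∀ y : F, y ∈ O ↔ ∃ u : 𝔬, algebraMap 𝔬 F u = y := by
    intro y
    rw [← SetLike.mem_coe, hO]
    exact Iff.rfl
  have hval : ∀ a c : ℕ, πF ^ ((a : ℤ) - c) ∈ O → c ≤ a := by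
    intro a c h
    by_contra hc
    push_neg at hc
    obtain ⟨u, hu⟩ := (hmem _).mp h
    have hm : (a : ℤ) - c = -(((c - a : ℕ) : ℤ)) := by omega
    have h1 : algebraMap 𝔬 F (u * π ^ (c - a)) = 1 := by
      rw [_root_.map_mul, hu, map_pow, ← hπF, hm, ← zpow_natCast πF (c - a), hzpow]
      simp
    have h2 : u * π ^ (c - a) = 1 := IsFractionRing.injective 𝔬 F (by rw [h1, _root_.map_one])
    have hdvd : π ∣ 1 := by
      rw [← h2]
      exact dvd_mul_of_dvd_right (dvd_pow_self π (by omega : c - a ≠ 0)) u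
    exact hπ.not_isUnit (isUnit_of_dvd_one hdvd)
  have hp' : πF ^ (-(l' : ℤ)) ≠ 0 := zpow_ne_zero _ hπ0
  have hq' : πF ^ (-((b : ℤ) - l')) ≠ 0 := zpow_ne_zero _ hπ0
  have hXinv : X'⁻¹ = upperMat n (πF ^ ((l' : ℤ))) (πF ^ ((b : ℤ) - l'))
      (-(πF ^ ((l' : ℤ)) * (πF ^ (-(l' : ℤ)) * x') * πF ^ ((b : ℤ) - l'))) := by
    rw [hX', upperMat_inv _ hp' hq']
    simp only [← _root_.zpow_neg, neg_neg]
  have eA : πF ^ ((l' : ℤ)) * πF ^ (-(l : ℤ)) = πF ^ ((l' : ℤ) - l) := by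
    rw [hzpow, sub_eq_add_neg]
  have eB : πF ^ ((b : ℤ) - l') * πF ^ (-((b : ℤ) - l)) = πF ^ ((l : ℤ) - l') := by
    rw [hzpow, show ((b : ℤ) - l') + -((b : ℤ) - l) = (l : ℤ) - l' from by ring]
  have eC0 : πF ^ ((l' : ℤ)) * πF ^ (-(l' : ℤ)) = 1 := by
    rw [hzpow]; simp
  have eC : πF ^ ((l' : ℤ)) * (πF ^ (-(l : ℤ)) * x) +
        -(πF ^ ((l' : ℤ)) * (πF ^ (-(l' : ℤ)) * x') * πF ^ ((b : ℤ) - l')) *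
          πF ^ (-((b : ℤ) - l))
      = πF ^ ((l' : ℤ) - l) * x - πF ^ ((l : ℤ) - l') * x' := by
    calc πF ^ ((l' : ℤ)) * (πF ^ (-(l : ℤ)) * x) +
          -(πF ^ ((l' : ℤ)) * (πF ^ (-(l' : ℤ)) * x') * πF ^ ((b : ℤ) - l')) *
            πF ^ (-((b : ℤ) - l))
        = (πF ^ ((l' : ℤ)) * πF ^ (-(l : ℤ))) * x -
          (πF ^ ((l' : ℤ)) * πF ^ (-(l' : ℤ))) *
            ((πF ^ ((b : ℤ) - l') * πF ^ (-((b : ℤ) - l)))) * x' := by ring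
      _ = πF ^ ((l' : ℤ) - l) * x - πF ^ ((l : ℤ) - l') * x' := by
          rw [eA, eB, eC0, one_mul]
  have hY : X'⁻¹ * X = upperMat n (πF ^ ((l' : ℤ) - l)) (πF ^ ((l : ℤ) - l'))
      (πF ^ ((l' : ℤ) - l) * x - πF ^ ((l : ℤ) - l') * x') := by
    rw [hXinv, hX, upperMat_mul, eA, eB, eC]
  constructor
  · rintro ⟨h1, -⟩
    rw [hY, upperMat_mem_iff] at h1
    obtain ⟨ha, hb, hc⟩ := h1
    have hll : l = l' := le_antisymm (hval l' l ha) (hval l l' hb)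
    refine ⟨hll, ?_⟩
    rw [hll] at hc
    simpa using hc
  · rintro ⟨hll, hxx⟩
    subst hll
    have hY' : X'⁻¹ * X = upperMat n (1 : F) 1 (x - x') := by
      rw [hY]
      simp
    constructor
    · rw [hY', upperMat_mem_iff]
      exact ⟨O.one_mem, O.one_mem, hxx⟩
    · rw [hY', upperMat_inv _ one_ne_zero one_ne_zero, upperMat_mem_iff]
      refine ⟨by simpa using O.one_mem, by simpa using O.one_mem, ?_⟩
      simpa using O.neg_mem hxx
end

section
/- Let 𝔬 be the valuation ring of a local field F with uniformizer π, residue field κ of odd cardinality f. Let v₁, v₂ ∈ 𝔬×, and let d₁ ≤ d₂ be nonnegative integers. For an integer b with 0 ≤ b < d₁/2, the number of pairs (l, x̄) with 0 ≤ l ≤ b and x̄ ∈ F/𝔬 such that the matrix A (with A₁₁ = π^{d₁−2l}v₁, A₁₂ = π^{d₁−2l}v₁x, A₂₂ = π^{d₁−2l}v₁x² + π^{d₂−2(b−l)}v₂ for any lift x of x̄) has entries in 𝔬, π^{b−l}x ∈ 𝔬, and reduces to the zero matrix modulo π, equals 1 + f + f² + ⋯ + f^b. -/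
open Matrix

private def aux_sigma_equiv {α : Type*} (b : ℕ) (P : ℕ → α → Prop) :
    {p : ℕ × α // p.1 ≤ b ∧ P p.1 p.2} ≃ Σ l : Fin (b + 1), {y : α // P l y} where
  toFun p := ⟨⟨p.1.1, Nat.lt_succ_of_le p.2.1⟩, ⟨p.1.2, p.2.2⟩⟩
  invFun q := ⟨(q.1, q.2.1), Nat.lt_succ_iff.mp q.1.2, q.2.2⟩
  left_inv p := rfl
  right_inv q := rfl

private lemma aux_card_quot_step {𝔬 : Type*} [CommRing 𝔬] [IsDomain 𝔬]
    (π : 𝔬) (hπ0 : π ≠ 0) (k : ℕ) :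
    Nat.card (𝔬 ⧸ Ideal.span {π ^ (k + 1)}) =
      Nat.card (𝔬 ⧸ Ideal.span {π ^ k}) * Nat.card (𝔬 ⧸ Ideal.span {π}) := by
  set S : Ideal 𝔬 := Ideal.span {π ^ (k + 1)} with hS
  set T : Ideal 𝔬 := Ideal.span {π ^ k} with hT
  have hST : S ≤ T := by
    rw [hS, hT, Ideal.span_singleton_le_span_singleton]
    exact pow_dvd_pow π (Nat.le_succ k)
  set N : Submodule 𝔬 (𝔬 ⧸ S) := Submodule.map S.mkQ T with hN
  set ψ : 𝔬 →ₗ[𝔬] (𝔬 ⧸ S) := LinearMap.toSpanSingleton 𝔬 (𝔬 ⧸ S) (S.mkQ (π ^ k)) with hψdef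
  have hψker : LinearMap.ker ψ = Ideal.span {π} := by
    ext a
    rw [LinearMap.mem_ker, hψdef, LinearMap.toSpanSingleton_apply, ← _root_.map_smul,
      smul_eq_mul, Submodule.mkQ_apply, Submodule.Quotient.mk_eq_zero, hS,
      Ideal.mem_span_singleton, Ideal.mem_span_singleton]
    constructor
    · rintro ⟨t, ht⟩
      refine ⟨t, mul_right_cancel₀ (pow_ne_zero k hπ0) ?_⟩
      rw [ht]; ring
    · rintro ⟨t, rfl⟩
      exact ⟨t, by ring⟩
  have hψrange : LinearMap.range ψ = N := by
    rw [hψdef, ← LinearMap.span_singleton_eq_range, hN, hT, Ideal.span,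
      Submodule.map_span, Set.image_singleton]
  have hNcard : Nat.card N = Nat.card (𝔬 ⧸ Ideal.span {π}) := by
    rw [← hψrange, ← hψker]
    exact (Nat.card_congr ψ.quotKerEquivRange.toEquiv).symm
  have h1 : Nat.card (𝔬 ⧸ S) = Nat.card ((𝔬 ⧸ S) ⧸ N) * Nat.card N :=
    AddSubgroup.card_eq_card_quotient_mul_card_addSubgroup N.toAddSubgroup
  have h2 : Nat.card ((𝔬 ⧸ S) ⧸ N) = Nat.card (𝔬 ⧸ T) :=
    Nat.card_congr (Submodule.quotientQuotientEquivQuotient S T hST).toEquiv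
  rw [h1, h2, hNcard]

private lemma aux_card_quot_pow {𝔬 : Type*} [CommRing 𝔬] [IsDomain 𝔬]
    (π : 𝔬) (hπ0 : π ≠ 0) (f : ℕ)
    (hf : Nat.card (𝔬 ⧸ Ideal.span {π}) = f) :
    ∀ k : ℕ, Nat.card (𝔬 ⧸ Ideal.span {π ^ k}) = f ^ k := by
  intro k
  induction k with
  | zero =>
      have h : Ideal.span {π ^ 0} = (⊤ : Ideal 𝔬) := by
        rw [pow_zero, Ideal.span_singleton_one]
      rw [h, pow_zero]
      haveI : Subsingleton (𝔬 ⧸ (⊤ : Ideal 𝔬)) :=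
        Submodule.Quotient.subsingleton_iff.mpr rfl
      exact Nat.card_of_subsingleton 0
  | succ k ih =>
      rw [aux_card_quot_step π hπ0 k, ih, hf, pow_succ]

private lemma aux_fiber_card {𝔬 : Type*} [CommRing 𝔬] [IsDomain 𝔬]
    {F : Type*} [Field F] [Algebra 𝔬 F] [IsFractionRing 𝔬 F]
    (π : 𝔬) (hπ0 : π ≠ 0) (k : ℕ) :
    Nat.card {y : F ⧸ LinearMap.range (Algebra.linearMap 𝔬 F) // ∃ x : F,
        Submodule.Quotient.mk x = y ∧
        (algebraMap 𝔬 F π) ^ k * x ∈ LinearMap.range (Algebra.linearMap 𝔬 F)}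
      = Nat.card (𝔬 ⧸ Ideal.span {π ^ k}) := by
  set O : Submodule 𝔬 F := LinearMap.range (Algebra.linearMap 𝔬 F) with hO
  have hπF0 : (algebraMap 𝔬 F π) ^ k ≠ 0 :=
    pow_ne_zero _ (fun h => hπ0 (IsFractionRing.injective 𝔬 F (h.trans (_root_.map_zero _).symm)))
  set u : F := ((algebraMap 𝔬 F π) ^ k)⁻¹ with hu
  set φ : 𝔬 →ₗ[𝔬] (F ⧸ O) := O.mkQ ∘ₗ LinearMap.toSpanSingleton 𝔬 F u with hφdef
  have hφ : ∀ a : 𝔬, φ a = Submodule.Quotient.mk (algebraMap 𝔬 F a * u) := by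
    intro a
    rw [hφdef, LinearMap.comp_apply, LinearMap.toSpanSingleton_apply, Algebra.smul_def,
      Submodule.mkQ_apply]
  have hrange : ∀ y : F ⧸ O, y ∈ LinearMap.range φ ↔
      (∃ x : F, Submodule.Quotient.mk x = y ∧ (algebraMap 𝔬 F π) ^ k * x ∈ O) := by
    intro y
    constructor
    · rintro ⟨a, rfl⟩
      refine ⟨algebraMap 𝔬 F a * u, (hφ a).symm, ?_⟩
      have h : (algebraMap 𝔬 F π) ^ k * (algebraMap 𝔬 F a * u) = algebraMap 𝔬 F a := by
        rw [hu]; field_simp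
      rw [h]
      exact ⟨a, rfl⟩
    · rintro ⟨x, rfl, hx⟩
      obtain ⟨c, hc⟩ := hx
      refine ⟨c, ?_⟩
      have h : algebraMap 𝔬 F c * u = x := by
        rw [Algebra.linearMap_apply] at hc
        rw [hc, hu]; field_simp
      rw [hφ c, h]
  have hker : LinearMap.ker φ = Ideal.span {π ^ k} := by
    ext a
    rw [LinearMap.mem_ker, hφ a, Submodule.Quotient.mk_eq_zero, Ideal.mem_span_singleton]
    constructor
    · rintro ⟨c, hc⟩
      rw [Algebra.linearMap_apply] at hc
      refine ⟨c, IsFractionRing.injective 𝔬 F ?_⟩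
      rw [_root_.map_mul, _root_.map_pow, hc, hu]
      field_simp
    · rintro ⟨c, rfl⟩
      refine ⟨c, ?_⟩
      rw [Algebra.linearMap_apply]
      rw [_root_.map_mul, _root_.map_pow, hu]
      field_simp
  calc Nat.card {y : F ⧸ O // ∃ x : F,
          Submodule.Quotient.mk x = y ∧ (algebraMap 𝔬 F π) ^ k * x ∈ O}
      = Nat.card (LinearMap.range φ) :=
        Nat.card_congr (Equiv.subtypeEquivRight fun y => (hrange y).symm)
    _ = Nat.card (𝔬 ⧸ LinearMap.ker φ) :=
        (Nat.card_congr φ.quotKerEquivRange.toEquiv).symm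
    _ = Nat.card (𝔬 ⧸ Ideal.span {π ^ k}) := by rw [hker]

private lemma aux_count {𝔬 : Type*} [CommRing 𝔬] [IsDomain 𝔬]
    {F : Type*} [Field F] [Algebra 𝔬 F] [IsFractionRing 𝔬 F]
    (π : 𝔬) (hπ0 : π ≠ 0) (f : ℕ)
    (hf' : Nat.card (𝔬 ⧸ Ideal.span {π}) = f) (hf0 : f ≠ 0) (b : ℕ) :
    Nat.card {p : ℕ × (F ⧸ LinearMap.range (Algebra.linearMap 𝔬 F)) //
        p.1 ≤ b ∧ ∃ x : F, Submodule.Quotient.mk x = p.2 ∧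
        (algebraMap 𝔬 F π) ^ ((b : ℤ) - p.1) * x ∈ LinearMap.range (Algebra.linearMap 𝔬 F)}
      = ∑ i ∈ Finset.range (b + 1), f ^ i := by
  set O : Submodule 𝔬 F := LinearMap.range (Algebra.linearMap 𝔬 F) with hO
  have hS : ∀ l : Fin (b + 1), Nat.card {y : F ⧸ O // ∃ x : F,
      Submodule.Quotient.mk x = y ∧ (algebraMap 𝔬 F π) ^ ((b : ℤ) - (l : ℕ)) * x ∈ O}
      = f ^ (b - (l : ℕ)) := by
    intro l
    have hl : (l : ℕ) ≤ b := Nat.lt_succ_iff.mp l.2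
    have h1 : ∀ y : F ⧸ O, (∃ x : F, Submodule.Quotient.mk x = y ∧
        (algebraMap 𝔬 F π) ^ ((b : ℤ) - (l : ℕ)) * x ∈ O) ↔ (∃ x : F,
        Submodule.Quotient.mk x = y ∧ (algebraMap 𝔬 F π) ^ (b - (l : ℕ)) * x ∈ O) := by
      intro y
      rw [show ((b : ℤ) - (l : ℕ)) = ((b - (l : ℕ) : ℕ) : ℤ) by omega, zpow_natCast]
    exact (Nat.card_congr (Equiv.subtypeEquivRight h1)).trans
      ((aux_fiber_card π hπ0 (b - l)).trans (aux_card_quot_pow π hπ0 f hf' (b - l)))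
  have hfin : ∀ l : Fin (b + 1), Finite {y : F ⧸ O // ∃ x : F,
      Submodule.Quotient.mk x = y ∧ (algebraMap 𝔬 F π) ^ ((b : ℤ) - (l : ℕ)) * x ∈ O} :=
    fun l => Nat.finite_of_card_ne_zero (by rw [hS l]; exact pow_ne_zero _ hf0)
  haveI hfint : ∀ l : Fin (b + 1), Fintype {y : F ⧸ O // ∃ x : F,
      Submodule.Quotient.mk x = y ∧ (algebraMap 𝔬 F π) ^ ((b : ℤ) - (l : ℕ)) * x ∈ O} :=
    fun l => @Fintype.ofFinite _ (hfin l)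
  refine Eq.trans (Nat.card_congr (aux_sigma_equiv b (fun l y => ∃ x : F,
    Submodule.Quotient.mk x = y ∧ (algebraMap 𝔬 F π) ^ ((b : ℤ) - l) * x ∈ O))) ?_
  have h2 : Nat.card (Σ l : Fin (b + 1), {y : F ⧸ O // ∃ x : F,
      Submodule.Quotient.mk x = y ∧ (algebraMap 𝔬 F π) ^ ((b : ℤ) - (l : ℕ)) * x ∈ O})
      = ∑ l : Fin (b + 1), f ^ (b - (l : ℕ)) := by
    classical
    rw [Nat.card_eq_fintype_card, Fintype.card_sigma]
    exact Finset.sum_congr rfl fun l _ => by rw [← Nat.card_eq_fintype_card, hS l]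
  refine h2.trans ?_
  rw [Fin.sum_univ_eq_sum_range (fun i => f ^ (b - i)) (b + 1),
    ← Finset.sum_range_reflect (fun j => f ^ j) (b + 1)]
  exact Finset.sum_congr rfl fun i hi => by
    rw [Finset.mem_range] at hi; congr 1 <;> omega


/-- for `0 ≤ b < d₁/2`, the number of pairs `(l, x̄)`, `0 ≤ l ≤ b`,
`x̄ ∈ F/𝔬`, such that (for a lift `x` of `x̄`) `π^{b−l}x ∈ 𝔬` and the matrix
`A = (π^{d₁−2l}v₁, π^{d₁−2l}v₁x; ⋯ , π^{d₁−2l}v₁x² + π^{d₂−2(b−l)}v₂)` has entries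
in `𝔬` reducing to `0` mod `π`, equals `1 + f + ⋯ + f^b`, where `f` is the (odd)
cardinality of the residue field. -/
theorem stmt10 {𝔬 : Type*} [CommRing 𝔬] [IsDomain 𝔬] [IsDiscreteValuationRing 𝔬]
    {F : Type*} [Field F] [Algebra 𝔬 F] [IsFractionRing 𝔬 F]
    (π : 𝔬) (hπ : Irreducible π) (πF : F) (hπF : πF = algebraMap 𝔬 F π)
    (O : Submodule 𝔬 F) (hO : O = LinearMap.range (Algebra.linearMap 𝔬 F))
    (f : ℕ) (hf : Nat.card (IsLocalRing.ResidueField 𝔬) = f) (hodd : Odd f)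
    (v₁ v₂ : 𝔬ˣ) (v₁F v₂F : F) (hv₁ : v₁F = algebraMap 𝔬 F (v₁ : 𝔬))
    (hv₂ : v₂F = algebraMap 𝔬 F (v₂ : 𝔬))
    (d₁ d₂ : ℕ) (hd : d₁ ≤ d₂) (b : ℕ) (hb : 2 * b < d₁) :
    Nat.card {p : ℕ × (F ⧸ O) // p.1 ≤ b ∧ ∃ x : F,
        Submodule.Quotient.mk x = p.2 ∧
        πF ^ ((b : ℤ) - p.1) * x ∈ O ∧
        (∀ i j, (!![πF ^ ((d₁ : ℤ) - 2 * p.1) * v₁F,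
                    πF ^ ((d₁ : ℤ) - 2 * p.1) * v₁F * x;
                    πF ^ ((d₁ : ℤ) - 2 * p.1) * v₁F * x,
                    πF ^ ((d₁ : ℤ) - 2 * p.1) * v₁F * x ^ 2
                      + πF ^ ((d₂ : ℤ) - 2 * ((b : ℤ) - p.1)) * v₂F] :
            Matrix (Fin 2) (Fin 2) F) i j ∈ O) ∧
        (∀ i j, ∃ c : 𝔬, (!![πF ^ ((d₁ : ℤ) - 2 * p.1) * v₁F,
                    πF ^ ((d₁ : ℤ) - 2 * p.1) * v₁F * x;
                    πF ^ ((d₁ : ℤ) - 2 * p.1) * v₁F * x,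
                    πF ^ ((d₁ : ℤ) - 2 * p.1) * v₁F * x ^ 2
                      + πF ^ ((d₂ : ℤ) - 2 * ((b : ℤ) - p.1)) * v₂F] :
            Matrix (Fin 2) (Fin 2) F) i j = algebraMap 𝔬 F (π * c))}
      = ∑ i ∈ Finset.range (b + 1), f ^ i := by
  subst hπF hv₁ hv₂ hO
  have hπ0 : π ≠ 0 := hπ.ne_zero
  have hf' : Nat.card (𝔬 ⧸ Ideal.span {π}) = f := by
    rw [← hπ.maximalIdeal_eq]; exact hf
  have hf0 : f ≠ 0 := by
    rcases hodd with ⟨m, hm⟩; omega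
  refine Eq.trans (Nat.card_congr (Equiv.subtypeEquivRight
    (q := fun p : ℕ × (F ⧸ LinearMap.range (Algebra.linearMap 𝔬 F)) => p.1 ≤ b ∧
      ∃ x : F, Submodule.Quotient.mk x = p.2 ∧
      (algebraMap 𝔬 F π) ^ ((b : ℤ) - p.1) * x ∈ LinearMap.range (Algebra.linearMap 𝔬 F))
    fun p => ?_)) (aux_count π hπ0 f hf' hf0 b)
  obtain ⟨l, y⟩ := p
  constructor
  · rintro ⟨hl, x, hmk, hmem, -, -⟩; exact ⟨hl, x, hmk, hmem⟩
  · rintro ⟨hl, x, hmk, hmem⟩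
    have hmem' := hmem
    obtain ⟨c₀, hc₀⟩ := hmem'
    rw [Algebra.linearMap_apply] at hc₀
    rw [show ((b : ℤ) - (l : ℕ)) = ((b - (l : ℕ) : ℕ) : ℤ) by omega, zpow_natCast] at hc₀
    have hmat : ∀ i j, ∃ c : 𝔬,
        (!![(algebraMap 𝔬 F π) ^ ((d₁ : ℤ) - 2 * (l : ℕ)) * algebraMap 𝔬 F (v₁ : 𝔬),
            (algebraMap 𝔬 F π) ^ ((d₁ : ℤ) - 2 * (l : ℕ)) * algebraMap 𝔬 F (v₁ : 𝔬) * x;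
            (algebraMap 𝔬 F π) ^ ((d₁ : ℤ) - 2 * (l : ℕ)) * algebraMap 𝔬 F (v₁ : 𝔬) * x,
            (algebraMap 𝔬 F π) ^ ((d₁ : ℤ) - 2 * (l : ℕ)) * algebraMap 𝔬 F (v₁ : 𝔬) * x ^ 2
              + (algebraMap 𝔬 F π) ^ ((d₂ : ℤ) - 2 * ((b : ℤ) - (l : ℕ)))
                * algebraMap 𝔬 F (v₂ : 𝔬)] :
          Matrix (Fin 2) (Fin 2) F) i j = algebraMap 𝔬 F (π * c) := by
      have h00 : ∃ c : 𝔬, (algebraMap 𝔬 F π) ^ ((d₁ : ℤ) - 2 * (l : ℕ))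
          * algebraMap 𝔬 F (v₁ : 𝔬) = algebraMap 𝔬 F (π * c) := by
        obtain ⟨m, hm⟩ : ∃ m, d₁ - 2 * l = m + 1 := ⟨d₁ - 2 * l - 1, by omega⟩
        refine ⟨π ^ m * (v₁ : 𝔬), ?_⟩
        rw [show ((d₁ : ℤ) - 2 * (l : ℕ)) = ((d₁ - 2 * l : ℕ) : ℤ) by omega, zpow_natCast,
          hm, _root_.map_mul, _root_.map_mul, _root_.map_pow]
        ring
      have h01 : ∃ c : 𝔬, (algebraMap 𝔬 F π) ^ ((d₁ : ℤ) - 2 * (l : ℕ))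
          * algebraMap 𝔬 F (v₁ : 𝔬) * x = algebraMap 𝔬 F (π * c) := by
        refine ⟨π ^ (d₁ - l - b - 1) * (v₁ : 𝔬) * c₀, ?_⟩
        rw [show ((d₁ : ℤ) - 2 * (l : ℕ))
            = ((((d₁ - l - b - 1) + 1) + (b - l) : ℕ) : ℤ) by omega, zpow_natCast]
        have h1 : (algebraMap 𝔬 F π) ^ (((d₁ - l - b - 1) + 1) + (b - l))
              * algebraMap 𝔬 F (v₁ : 𝔬) * x
            = (algebraMap 𝔬 F π) ^ ((d₁ - l - b - 1) + 1) * algebraMap 𝔬 F (v₁ : 𝔬)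
              * ((algebraMap 𝔬 F π) ^ (b - l) * x) := by
          rw [pow_add]; ring
        rw [h1, ← hc₀, _root_.map_mul, _root_.map_mul, _root_.map_mul, _root_.map_pow]
        ring
      have h11 : ∃ c : 𝔬, (algebraMap 𝔬 F π) ^ ((d₁ : ℤ) - 2 * (l : ℕ))
          * algebraMap 𝔬 F (v₁ : 𝔬) * x ^ 2
          + (algebraMap 𝔬 F π) ^ ((d₂ : ℤ) - 2 * ((b : ℤ) - (l : ℕ)))
            * algebraMap 𝔬 F (v₂ : 𝔬) = algebraMap 𝔬 F (π * c) := by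
        refine ⟨π ^ (d₁ - 2 * b - 1) * (v₁ : 𝔬) * (c₀ * c₀)
            + π ^ (d₂ - 2 * (b - l) - 1) * (v₂ : 𝔬), ?_⟩
        rw [show ((d₁ : ℤ) - 2 * (l : ℕ))
            = ((((d₁ - 2 * b - 1) + 1) + ((b - l) + (b - l)) : ℕ) : ℤ) by omega, zpow_natCast,
          show ((d₂ : ℤ) - 2 * ((b : ℤ) - (l : ℕ)))
            = (((d₂ - 2 * (b - l) - 1) + 1 : ℕ) : ℤ) by omega, zpow_natCast]
        have h1 : (algebraMap 𝔬 F π) ^ (((d₁ - 2 * b - 1) + 1) + ((b - l) + (b - l)))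
              * algebraMap 𝔬 F (v₁ : 𝔬) * x ^ 2
              + (algebraMap 𝔬 F π) ^ ((d₂ - 2 * (b - l) - 1) + 1) * algebraMap 𝔬 F (v₂ : 𝔬)
            = (algebraMap 𝔬 F π) ^ ((d₁ - 2 * b - 1) + 1) * algebraMap 𝔬 F (v₁ : 𝔬)
              * (((algebraMap 𝔬 F π) ^ (b - l) * x) * ((algebraMap 𝔬 F π) ^ (b - l) * x))
              + (algebraMap 𝔬 F π) ^ ((d₂ - 2 * (b - l) - 1) + 1)
                * algebraMap 𝔬 F (v₂ : 𝔬) := by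
          rw [pow_add, pow_add]; ring
        rw [h1, ← hc₀]
        simp only [_root_.map_add, _root_.map_mul, _root_.map_pow]
        ring
      intro i j
      fin_cases i <;> fin_cases j
      · exact h00
      · exact h01
      · exact h01
      · exact h11
    refine ⟨hl, x, hmk, hmem, fun i j => ?_, hmat⟩
    obtain ⟨c, hc⟩ := hmat i j
    rw [hc]
    exact ⟨π * c, rfl⟩
end

section
/- Let 𝔬 be the valuation ring of a local field with uniformizer π and odd residue characteristic. Let v₁, v₂ ∈ 𝔬× and d₁ ≤ d₂ nonnegative integers with d₁ + d₂ even, and suppose −v₁v₂ is a square in 𝔬×. Fix w ∈ 𝔬× with v₁w² + v₂ = 0. Then for any integers b, l with 0 ≤ l < b − d₂/2, and x = w·∑_{i≥1} s_iπ^{−i} with digits s_i in a fixed set of representatives of κ containing 0, ±1 (almost all zero), the conditions π^{b−l}x ∈ 𝔬 and π^{d₁−2l}v₁x² + π^{d₂−2(b−l)}v₂ ∈ 𝔬 together are equivalent to: s_{(b−2l)−(d₂−d₁)/2} = ±1 and s_i = 0 for all i > (d₁+d₂)/2 − b with i ≠ (b−2l)−(d₂−d₁)/2. -/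
private lemma digitAux {R : Type*} [CommRing R] [IsDomain R] {π : R} (hπ : Prime π) :
    ∀ (m N : ℕ) (c : ℕ → R), (∀ j, π ∣ c j → c j = 0) →
      ((π ^ m ∣ ∑ j ∈ Finset.range (N + 1), c j * π ^ j) ↔
        ∀ j, j ≤ N → j < m → c j = 0) := by
  intro m
  induction m with
  | zero => intro N c hc; simp
  | succ m ih =>
    intro N c hc
    constructor
    · intro h
      have hsum : ∑ j ∈ Finset.range (N + 1), c j * π ^ j
          = (∑ j ∈ Finset.range N, c (j + 1) * π ^ (j + 1)) + c 0 := by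
        rw [Finset.sum_range_succ']; simp
      have hc0 : c 0 = 0 := by
        apply hc
        have h1 : π ∣ ∑ j ∈ Finset.range (N + 1), c j * π ^ j :=
          dvd_trans (dvd_pow_self π (Nat.succ_ne_zero m)) h
        have h2 : π ∣ ∑ j ∈ Finset.range N, c (j + 1) * π ^ (j + 1) :=
          Finset.dvd_sum fun j _ => Dvd.dvd.mul_left (dvd_pow_self π (Nat.succ_ne_zero j)) _
        have : c 0 = (∑ j ∈ Finset.range (N + 1), c j * π ^ j)
            - ∑ j ∈ Finset.range N, c (j + 1) * π ^ (j + 1) := by rw [hsum]; ring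
        rw [this]; exact dvd_sub h1 h2
      have hrw : ∑ j ∈ Finset.range (N + 1), c j * π ^ j
          = π * ∑ j ∈ Finset.range N, c (j + 1) * π ^ j := by
        rw [hsum, hc0, add_zero, Finset.mul_sum]
        apply Finset.sum_congr rfl
        intro j _; ring
      rw [hrw, pow_succ, mul_comm (π ^ m) π] at h
      have hT : π ^ m ∣ ∑ j ∈ Finset.range N, c (j + 1) * π ^ j :=
        (mul_dvd_mul_iff_left hπ.ne_zero).mp h
      intro j hjN hjm
      match j with
      | 0 => exact hc0
      | j' + 1 =>
        match N, hjN with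
        | N' + 1, hjN =>
          have := (ih N' (fun j => c (j + 1)) (fun j => hc (j + 1))).mp hT
          exact this j' (by omega) (by omega)
    · intro hall
      apply Finset.dvd_sum
      intro j hj
      rcases lt_or_ge j (m + 1) with hlt | hle
      · rw [hall j (by simpa using Nat.lt_succ_iff.mp (Finset.mem_range.mp hj)) hlt, zero_mul]
        exact dvd_zero _
      · exact Dvd.dvd.mul_left (pow_dvd_pow π hle) _

private lemma digit_dvd_iff {R : Type*} [CommRing R] [IsDomain R] {π : R} (hπ : Prime π)
    (u v : ℕ → R) (huv : ∀ i, π ∣ u i - v i → u i = v i) (N m : ℕ) :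
    (π ^ m ∣ ∑ i ∈ Finset.range (N + 1), (u i - v i) * π ^ (N - i)) ↔
      ∀ i, i ≤ N → N < m + i → u i = v i := by
  have hre : ∑ i ∈ Finset.range (N + 1), (u i - v i) * π ^ (N - i)
      = ∑ j ∈ Finset.range (N + 1), (u (N - j) - v (N - j)) * π ^ j := by
    rw [← Finset.sum_range_reflect (fun j => (u (N - j) - v (N - j)) * π ^ j) (N + 1)]
    apply Finset.sum_congr rfl
    intro i hi
    simp only [Finset.mem_range] at hi
    have h1 : N + 1 - 1 - i = N - i := by omega
    have h2 : N - (N - i) = i := by omega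
    rw [h1, h2]
  rw [hre, digitAux hπ m N _ (fun j hd => sub_eq_zero_of_eq (huv _ hd))]
  constructor
  · intro h i hiN hNm
    have := h (N - i) (by omega) (by omega)
    rw [Nat.sub_sub_self hiN] at this
    exact sub_eq_zero.mp this
  · intro h j hjN hjm
    exact sub_eq_zero_of_eq (h (N - j) (by omega) (by omega))

private lemma not_dvd_mul_dvr {R : Type*} [CommRing R] [IsDomain R] [IsDiscreteValuationRing R]
    {π X Y : R} (hπ : Irreducible π) {a b : ℕ}
    (hX : ¬ π ^ (a + 1) ∣ X) (hY : ¬ π ^ (b + 1) ∣ Y) : ¬ π ^ (a + b + 1) ∣ X * Y := by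
  have hX0 : X ≠ 0 := fun h => hX (h ▸ dvd_zero _)
  have hY0 : Y ≠ 0 := fun h => hY (h ▸ dvd_zero _)
  obtain ⟨n, u₁, rfl⟩ := IsDiscreteValuationRing.eq_unit_mul_pow_irreducible hX0 hπ
  obtain ⟨p, u₂, rfl⟩ := IsDiscreteValuationRing.eq_unit_mul_pow_irreducible hY0 hπ
  have hn : n ≤ a := by
    by_contra hna
    exact hX (Dvd.dvd.mul_left (pow_dvd_pow π (by omega)) _)
  have hp : p ≤ b := by
    by_contra hpb
    exact hY (Dvd.dvd.mul_left (pow_dvd_pow π (by omega)) _)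
  intro h
  have h1 : π ^ (n + p + 1) ∣ (↑u₁ * ↑u₂ : R) * π ^ (n + p) := by
    have hh : π ^ (a + b + 1) ∣ (↑u₁ * ↑u₂ : R) * π ^ (n + p) := by
      have e : (↑u₁ * π ^ n) * (↑u₂ * π ^ p) = (↑u₁ * ↑u₂ : R) * π ^ (n + p) := by
        rw [pow_add]; ring
      rwa [e] at h
    exact dvd_trans (pow_dvd_pow π (by omega)) hh
  have h2 : π ^ (n + p) * π ∣ π ^ (n + p) * (↑u₁ * ↑u₂ : R) := by
    have e1 : π ^ (n + p + 1) = π ^ (n + p) * π := by rw [pow_succ]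
    have e2 : (↑u₁ * ↑u₂ : R) * π ^ (n + p) = π ^ (n + p) * (↑u₁ * ↑u₂ : R) := by ring
    rwa [e1, e2] at h1
  have h3 : π ∣ (↑u₁ * ↑u₂ : R) :=
    (mul_dvd_mul_iff_left (pow_ne_zero _ hπ.ne_zero)).mp h2
  exact hπ.not_isUnit (isUnit_of_dvd_unit h3 ((u₁.isUnit).mul (u₂.isUnit)))

private lemma mem_O_iff {𝔬 F : Type*} [CommRing 𝔬] [IsDomain 𝔬] [Field F] [Algebra 𝔬 F]
    [IsFractionRing 𝔬 F] {π : 𝔬} (hπ0 : π ≠ 0) {πF : F} (hπF : πF = algebraMap 𝔬 F π)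
    {O : Subring F} (hO : (O : Set F) = Set.range (algebraMap 𝔬 F))
    (n : ℕ) (a : 𝔬) : πF ^ (-(n : ℤ)) * algebraMap 𝔬 F a ∈ O ↔ π ^ n ∣ a := by
  have hinj : Function.Injective (algebraMap 𝔬 F) := IsFractionRing.injective 𝔬 F
  have hπF0 : πF ≠ 0 := by
    rw [hπF]
    intro h
    exact hπ0 (hinj (by rw [h, map_zero]))
  have hpow : πF ^ n = algebraMap 𝔬 F (π ^ n) := by rw [map_pow, hπF]
  rw [zpow_neg, zpow_natCast]
  constructor
  · intro h
    rw [← SetLike.mem_coe, hO] at h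
    obtain ⟨c, hc⟩ := h
    refine ⟨c, hinj ?_⟩
    have h1 : πF ^ n * algebraMap 𝔬 F c = πF ^ n * ((πF ^ n)⁻¹ * algebraMap 𝔬 F a) := by
      rw [hc]
    rw [mul_inv_cancel_left₀ (pow_ne_zero n hπF0)] at h1
    rw [map_mul, ← hpow, ← h1]
  · rintro ⟨c, rfl⟩
    rw [← SetLike.mem_coe, hO]
    refine ⟨c, ?_⟩
    rw [map_mul, ← hpow, inv_mul_cancel_left₀ (pow_ne_zero n hπF0)]

/-- with `−v₁v₂` a square, `v₁w² + v₂ = 0`, `0 ≤ l < b − d₂/2`, and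
`x = w·∑_{i≥1} s_iπ^{−i}` a digit expansion with digits in a set `S` of residue
representatives containing `0, ±1`, the integrality conditions `π^{b−l}x ∈ 𝔬` and
`π^{d₁−2l}v₁x² + π^{d₂−2(b−l)}v₂ ∈ 𝔬` hold if and only if
`s_k = ±1` for `k = (b−2l)−(d₂−d₁)/2` and `s_i = 0` for all
`i > (d₁+d₂)/2 − b` with `i ≠ k`. -/
theorem stmt18 {𝔬 : Type*} [CommRing 𝔬] [IsDomain 𝔬] [IsDiscreteValuationRing 𝔬]
    {F : Type*} [Field F] [Algebra 𝔬 F] [IsFractionRing 𝔬 F]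
    (π : 𝔬) (hπ : Irreducible π) (πF : F) (hπF : πF = algebraMap 𝔬 F π)
    (O : Subring F) (hO : (O : Set F) = Set.range (algebraMap 𝔬 F))
    (hchar : ringChar (IsLocalRing.ResidueField 𝔬) ≠ 2)
    (S : Set 𝔬) (hS0 : (0 : 𝔬) ∈ S) (hS1 : (1 : 𝔬) ∈ S) (hSm1 : (-1 : 𝔬) ∈ S)
    (hSrep : ∀ y : 𝔬, ∃! c : 𝔬, c ∈ S ∧
      IsLocalRing.residue 𝔬 c = IsLocalRing.residue 𝔬 y)
    (v₁ v₂ w : 𝔬) (hv₁ : IsUnit v₁) (hv₂ : IsUnit v₂) (hw : IsUnit w)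
    (hvw : v₁ * w ^ 2 + v₂ = 0) (hsq : IsSquare (-(v₁ * v₂)))
    (d₁ d₂ b l : ℕ) (hd : d₁ ≤ d₂) (hpar : Even (d₁ + d₂))
    (hl : 2 * l + d₂ < 2 * b)
    (s : ℕ → 𝔬) (hsS : ∀ i, s i ∈ S) (hfin : (Function.support s).Finite)
    (hs0 : s 0 = 0)
    (x : F)
    (hx : x = algebraMap 𝔬 F w *
      ∑ᶠ i : ℕ, algebraMap 𝔬 F (s i) * πF ^ (-(i : ℤ)))
    (k : ℕ) (hk : (k : ℤ) = (b : ℤ) - 2 * l - ((d₂ : ℤ) - d₁) / 2) :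
    (πF ^ ((b : ℤ) - l) * x ∈ O ∧
      πF ^ ((d₁ : ℤ) - 2 * l) * algebraMap 𝔬 F v₁ * x ^ 2
        + πF ^ ((d₂ : ℤ) - 2 * ((b : ℤ) - l)) * algebraMap 𝔬 F v₂ ∈ O)
    ↔ ((s k = 1 ∨ s k = -1) ∧
        ∀ i : ℕ, ((d₁ : ℤ) + d₂) / 2 - b < (i : ℤ) → i ≠ k → s i = 0) := by
  -- basic facts
  have hπ0 : π ≠ 0 := hπ.ne_zero
  have hinj : Function.Injective (algebraMap 𝔬 F) := IsFractionRing.injective 𝔬 F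
  have hπF0 : πF ≠ 0 := by
    rw [hπF]; intro h; exact hπ0 (hinj (by rw [h, map_zero]))
  have hprime : Prime π := hπ.prime
  -- 2 is a unit
  have h2unit : IsUnit (2 : 𝔬) := by
    rw [← IsLocalRing.notMem_maximalIdeal]
    intro hmem
    have h20 : IsLocalRing.residue 𝔬 2 = 0 := (Ideal.Quotient.eq_zero_iff_mem).mpr hmem
    have hne : (2 : IsLocalRing.ResidueField 𝔬) ≠ 0 := Ring.two_ne_zero hchar
    exact hne (by rw [← map_ofNat (IsLocalRing.residue 𝔬) 2]; exact h20)
  have hn2 : ¬ π ∣ (2 : 𝔬) := fun hd => hπ.not_isUnit (isUnit_of_dvd_unit hd h2unit)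
  -- separation of digits
  have hsep : ∀ c₁ ∈ S, ∀ c₂ ∈ S, π ∣ c₁ - c₂ → c₁ = c₂ := by
    intro c₁ hc₁ c₂ hc₂ hdvd
    have hres : IsLocalRing.residue 𝔬 c₁ = IsLocalRing.residue 𝔬 c₂ := by
      have : IsLocalRing.residue 𝔬 (c₁ - c₂) = 0 := by
        apply (Ideal.Quotient.eq_zero_iff_mem).mpr
        obtain ⟨d, hd⟩ := hdvd
        rw [hd]
        exact Ideal.mul_mem_right d _ ((IsLocalRing.mem_maximalIdeal π).mpr hπ.not_isUnit)
      rw [map_sub, sub_eq_zero] at this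
      exact this
    exact (hSrep c₂).unique ⟨hc₁, hres⟩ ⟨hc₂, rfl⟩
  -- arithmetic setup
  obtain ⟨c0, hc0⟩ := hpar
  have he : ∃ e : ℕ, d₂ = d₁ + 2 * e := ⟨c0 - d₁, by omega⟩
  obtain ⟨e, he⟩ := he
  have hkb : k + 2 * l + e = b := by omega
  -- choice of N
  obtain ⟨N0, hN0⟩ : ∃ N0 : ℕ, ∀ i, N0 < i → s i = 0 :=
    ⟨hfin.toFinset.sup id, fun i hi => by
      by_contra hne
      have hle : i ≤ hfin.toFinset.sup id := Finset.le_sup (f := id) (hfin.mem_toFinset.mpr hne)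
      omega⟩
  set N : ℕ := N0 + b + d₁ + d₂ + k + 1 with hNdef
  have hNs : ∀ i, N < i → s i = 0 := fun i hi => hN0 i (by omega)
  have hNb : b ≤ N := by omega
  have hNk : k ≤ N := by omega
  -- the main quantities
  set A : 𝔬 := ∑ i ∈ Finset.range (N + 1), s i * π ^ (N - i) with hAdef
  set q : ℕ := N - k with hqdef
  set a₁ : ℕ := N + l - b with ha₁def
  set a₂ : ℕ := 2 * N + 2 * l - d₁ with ha₂def
  set μ : ℕ := N + 2 * l + k - d₁ with hμdef
  have hqk : q + k = N := by omega
  have ha₁ : a₁ + b = N + l := by omega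
  have ha₂ : a₂ + d₁ = 2 * N + 2 * l := by omega
  have hμ : μ + d₁ = N + 2 * l + k := by omega
  have haμ : a₂ = μ + q := by omega
  have hq1 : q + 1 ≤ μ := by omega
  have ha₁μ : a₁ ≤ μ := by omega
  have ha₁q : a₁ ≤ q := by omega
  -- normal form of x
  have hAF : algebraMap 𝔬 F A = ∑ i ∈ Finset.range (N + 1),
      algebraMap 𝔬 F (s i) * πF ^ ((N : ℤ) - i) := by
    rw [hAdef, map_sum]
    apply Finset.sum_congr rfl
    intro i hi
    simp only [Finset.mem_range] at hi
    rw [map_mul, map_pow, ← hπF, ← zpow_natCast πF (N - i)]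
    congr 2
    omega
  have hsupp : (Function.support fun i : ℕ => algebraMap 𝔬 F (s i) * πF ^ (-(i : ℤ)))
      ⊆ ↑(Finset.range (N + 1)) := by
    intro i hi
    simp only [Function.mem_support] at hi
    simp only [Finset.coe_range, Set.mem_Iio]
    by_contra hlt
    apply hi
    rw [hNs i (by omega), map_zero, zero_mul]
  have hxA : x = πF ^ (-(N : ℤ)) * algebraMap 𝔬 F (w * A) := by
    rw [hx, finsum_eq_sum_of_support_subset _ hsupp, map_mul, hAF]
    rw [Finset.mul_sum, Finset.mul_sum, Finset.mul_sum]
    apply Finset.sum_congr rfl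
    intro i hi
    simp only [Finset.mem_range] at hi
    have hzp : πF ^ (-(i : ℤ)) = πF ^ (-(N : ℤ)) * πF ^ ((N : ℤ) - i) := by
      rw [← zpow_add₀ hπF0]
      congr 1
      ring
    rw [hzp]
    ring
  -- condition A
  have hcondA : (πF ^ ((b : ℤ) - l) * x ∈ O) ↔ π ^ a₁ ∣ A := by
    have heq : πF ^ ((b : ℤ) - l) * x = πF ^ (-(a₁ : ℤ)) * algebraMap 𝔬 F (w * A) := by
      rw [hxA, ← mul_assoc, ← zpow_add₀ hπF0]
      have hz : (b : ℤ) - l + -(N : ℤ) = -(a₁ : ℤ) := by omega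
      rw [hz]
    rw [heq, mem_O_iff hπ0 hπF hO a₁ (w * A), hw.dvd_mul_left]
  -- condition B
  have hv₂' : v₂ = -(v₁ * w ^ 2) := by linear_combination hvw
  have hT2 : πF ^ ((d₂ : ℤ) - 2 * ((b : ℤ) - l)) * algebraMap 𝔬 F v₂
      = -(πF ^ (-(a₂ : ℤ)) * algebraMap 𝔬 F (v₁ * w ^ 2 * π ^ (2 * q))) := by
    rw [hv₂']
    simp only [map_neg, map_mul, map_pow, ← hπF]
    have hex : ((d₂ : ℤ) - 2 * ((b : ℤ) - l)) = -(a₂ : ℤ) + ((2 * q : ℕ) : ℤ) := by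
      push_cast; omega
    rw [hex, zpow_add₀ hπF0, zpow_natCast]
    ring
  have hNN : (πF ^ (-(N : ℤ))) ^ 2 = πF ^ (-(2 * (N : ℤ))) := by
    rw [pow_two, ← zpow_add₀ hπF0]
    congr 1; ring
  have hT1 : πF ^ ((d₁ : ℤ) - 2 * l) * algebraMap 𝔬 F v₁ * x ^ 2
      = πF ^ (-(a₂ : ℤ)) * algebraMap 𝔬 F (v₁ * (w * A) ^ 2) := by
    rw [hxA, mul_pow, hNN]
    simp only [map_mul, map_pow]
    have hex : ((d₁ : ℤ) - 2 * l) = -(a₂ : ℤ) + 2 * (N : ℤ) := by push_cast; omega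
    rw [hex, zpow_add₀ hπF0]
    have h1 : πF ^ (2 * (N : ℤ)) * πF ^ (-(2 * (N : ℤ))) = 1 := by
      rw [← zpow_add₀ hπF0]; simp
    linear_combination (πF ^ (-(a₂ : ℤ)) * algebraMap 𝔬 F v₁ *
      (algebraMap 𝔬 F w * algebraMap 𝔬 F A) ^ 2) * h1
  have hBelt : πF ^ ((d₁ : ℤ) - 2 * l) * algebraMap 𝔬 F v₁ * x ^ 2
      + πF ^ ((d₂ : ℤ) - 2 * ((b : ℤ) - l)) * algebraMap 𝔬 F v₂
      = πF ^ (-(a₂ : ℤ)) * algebraMap 𝔬 F (v₁ * w ^ 2 * ((A - π ^ q) * (A + π ^ q))) := by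
    rw [hT1, hT2]
    have hrg : v₁ * w ^ 2 * ((A - π ^ q) * (A + π ^ q))
        = v₁ * (w * A) ^ 2 - v₁ * w ^ 2 * π ^ (2 * q) := by ring
    rw [hrg, map_sub]
    ring
  have hcondB : (πF ^ ((d₁ : ℤ) - 2 * l) * algebraMap 𝔬 F v₁ * x ^ 2
      + πF ^ ((d₂ : ℤ) - 2 * ((b : ℤ) - l)) * algebraMap 𝔬 F v₂ ∈ O)
      ↔ π ^ a₂ ∣ (A - π ^ q) * (A + π ^ q) := by
    rw [hBelt, mem_O_iff hπ0 hπF hO a₂ _, (hv₁.mul (hw.pow 2)).dvd_mul_left]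
  -- core divisibility equivalence
  have h2P : ¬ π ^ (q + 1) ∣ 2 * π ^ q := by
    intro hdd
    apply hn2
    have h1 : π ^ q * π ∣ π ^ q * 2 := by
      have e1 : π ^ (q + 1) = π ^ q * π := pow_succ π q
      have e2 : (2 : 𝔬) * π ^ q = π ^ q * 2 := by ring
      rwa [e1, e2] at hdd
    exact (mul_dvd_mul_iff_left (pow_ne_zero q hπ0)).mp h1
  have hcore : π ^ a₂ ∣ (A - π ^ q) * (A + π ^ q)
      ↔ (π ^ μ ∣ A - π ^ q ∨ π ^ μ ∣ A + π ^ q) := by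
    constructor
    · intro h
      by_cases h1 : π ^ (q + 1) ∣ A - π ^ q
      · left
        have hd1 : π ^ q ∣ A + π ^ q := by
          have e : A + π ^ q = (A - π ^ q) + 2 * π ^ q := by ring
          rw [e]
          exact dvd_add (dvd_trans (pow_dvd_pow π (Nat.le_succ q)) h1)
            (Dvd.dvd.mul_left dvd_rfl 2)
        obtain ⟨c, hc⟩ := hd1
        have hπc : ¬ π ∣ c := by
          intro hpc
          apply h2P
          have h3 : π ^ (q + 1) ∣ A + π ^ q := by
            rw [hc, pow_succ]
            exact mul_dvd_mul_left _ hpc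
          have e : (2 : 𝔬) * π ^ q = (A + π ^ q) - (A - π ^ q) := by ring
          rw [e]
          exact dvd_sub h3 h1
        have h4 : π ^ μ ∣ (A - π ^ q) * c := by
          have e2 : π ^ a₂ = π ^ q * π ^ μ := by rw [haμ, pow_add]; ring
          rw [hc, e2] at h
          have e1 : (A - π ^ q) * (π ^ q * c) = π ^ q * ((A - π ^ q) * c) := by ring
          rw [e1] at h
          exact (mul_dvd_mul_iff_left (pow_ne_zero q hπ0)).mp h
        exact hprime.pow_dvd_of_dvd_mul_right μ hπc h4
      · by_cases h2 : π ^ (q + 1) ∣ A + π ^ q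
        · right
          have hd1 : π ^ q ∣ A - π ^ q := by
            have e : A - π ^ q = (A + π ^ q) - 2 * π ^ q := by ring
            rw [e]
            exact dvd_sub (dvd_trans (pow_dvd_pow π (Nat.le_succ q)) h2)
              (Dvd.dvd.mul_left dvd_rfl 2)
          obtain ⟨c, hc⟩ := hd1
          have hπc : ¬ π ∣ c := by
            intro hpc
            apply h2P
            have h3 : π ^ (q + 1) ∣ A - π ^ q := by
              rw [hc, pow_succ]
              exact mul_dvd_mul_left _ hpc
            have e : (2 : 𝔬) * π ^ q = (A + π ^ q) - (A - π ^ q) := by ring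
            rw [e]
            exact dvd_sub h2 h3
          have h4 : π ^ μ ∣ (A + π ^ q) * c := by
            have e2 : π ^ a₂ = π ^ q * π ^ μ := by rw [haμ, pow_add]; ring
            rw [hc, e2] at h
            have e1 : π ^ q * c * (A + π ^ q) = π ^ q * ((A + π ^ q) * c) := by ring
            rw [e1] at h
            exact (mul_dvd_mul_iff_left (pow_ne_zero q hπ0)).mp h
          exact hprime.pow_dvd_of_dvd_mul_right μ hπc h4
        · exact absurd (dvd_trans (pow_dvd_pow π (by omega)) h)
            (not_dvd_mul_dvr hπ h1 h2)
    · rintro (h | h)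
      · have hd2 : π ^ q ∣ A + π ^ q := by
          have e : A + π ^ q = (A - π ^ q) + 2 * π ^ q := by ring
          rw [e]
          exact dvd_add (dvd_trans (pow_dvd_pow π (by omega)) h)
            (Dvd.dvd.mul_left dvd_rfl 2)
        have e2 : π ^ a₂ = π ^ μ * π ^ q := by rw [haμ, pow_add]
        rw [e2]
        exact mul_dvd_mul h hd2
      · have hd2 : π ^ q ∣ A - π ^ q := by
          have e : A - π ^ q = (A + π ^ q) - 2 * π ^ q := by ring
          rw [e]
          exact dvd_sub (dvd_trans (pow_dvd_pow π (by omega)) h)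
            (Dvd.dvd.mul_left dvd_rfl 2)
        have e2 : π ^ a₂ = π ^ q * π ^ μ := by rw [haμ, pow_add]; ring
        rw [e2]
        exact mul_dvd_mul hd2 h
  -- digit translations
  set t1 : ℕ → 𝔬 := fun i => if i = k then 1 else 0 with ht1def
  set t2 : ℕ → 𝔬 := fun i => if i = k then -1 else 0 with ht2def
  have ht1S : ∀ i, t1 i ∈ S := by
    intro i; rw [ht1def]; dsimp only; split
    · exact hS1
    · exact hS0
  have ht2S : ∀ i, t2 i ∈ S := by
    intro i; rw [ht2def]; dsimp only; split
    · exact hSm1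
    · exact hS0
  have htsum : ∀ (t : ℕ → 𝔬) (u : 𝔬), t k = u → (∀ i, i ≠ k → t i = 0) →
      ∑ i ∈ Finset.range (N + 1), t i * π ^ (N - i) = u * π ^ q := by
    intro t u hk0 hne
    rw [Finset.sum_eq_single k]
    · rw [hk0, hqdef]
    · intro i _ hik; rw [hne i hik, zero_mul]
    · intro habs; exact absurd (Finset.mem_range.mpr (by omega)) habs
  have hsub1 : ∑ i ∈ Finset.range (N + 1), (s i - t1 i) * π ^ (N - i) = A - π ^ q := by
    simp only [sub_mul]
    rw [Finset.sum_sub_distrib,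
      htsum t1 1 (by simp [ht1def]) (fun i hik => by simp [ht1def, hik]), one_mul, ← hAdef]
  have hsub2 : ∑ i ∈ Finset.range (N + 1), (s i - t2 i) * π ^ (N - i) = A + π ^ q := by
    simp only [sub_mul]
    rw [Finset.sum_sub_distrib,
      htsum t2 (-1) (by simp [ht2def]) (fun i hik => by simp [ht2def, hik]), ← hAdef]
    ring
  have huv1 : ∀ i, π ∣ s i - t1 i → s i = t1 i :=
    fun i hdd => hsep (s i) (hsS i) (t1 i) (ht1S i) hdd
  have huv2 : ∀ i, π ∣ s i - t2 i → s i = t2 i :=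
    fun i hdd => hsep (s i) (hsS i) (t2 i) (ht2S i) hdd
  have hD1 : (π ^ μ ∣ A - π ^ q) ↔ ∀ i, i ≤ N → N < μ + i → s i = t1 i := by
    rw [← hsub1]; exact digit_dvd_iff hprime s t1 huv1 N μ
  have hD2 : (π ^ μ ∣ A + π ^ q) ↔ ∀ i, i ≤ N → N < μ + i → s i = t2 i := by
    rw [← hsub2]; exact digit_dvd_iff hprime s t2 huv2 N μ
  have hMi : ∀ i : ℕ, (((d₁ : ℤ) + d₂) / 2 - b < (i : ℤ)) ↔ N < μ + i := by
    intro i; constructor <;> intro h <;> omega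
  have hkμ : N < μ + k := by omega
  -- final assembly
  rw [hcondA, hcondB, hcore]
  constructor
  · rintro ⟨hA, hBor⟩
    rcases hBor with h | h
    · have hdig := hD1.mp h
      constructor
      · left
        have := hdig k hNk hkμ
        simpa [ht1def] using this
      · intro i hi hik
        by_cases hiN : i ≤ N
        · have := hdig i hiN ((hMi i).mp hi)
          rw [this, ht1def]
          simp [hik]
        · exact hNs i (by omega)
    · have hdig := hD2.mp h
      constructor
      · right
        have := hdig k hNk hkμ
        simpa [ht2def] using this
      · intro i hi hik
        by_cases hiN : i ≤ N
        · have := hdig i hiN ((hMi i).mp hi)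
          rw [this, ht2def]
          simp [hik]
        · exact hNs i (by omega)
  · rintro ⟨hsk, hz⟩
    rcases hsk with h1 | h1
    · have hdig : ∀ i, i ≤ N → N < μ + i → s i = t1 i := by
        intro i hiN hNμ
        by_cases hik : i = k
        · subst hik; simp [ht1def, h1]
        · rw [hz i ((hMi i).mpr hNμ) hik, ht1def]; simp [hik]
      have hdiv := hD1.mpr hdig
      refine ⟨?_, Or.inl hdiv⟩
      have e1 : A = (A - π ^ q) + π ^ q := by ring
      rw [e1]
      exact dvd_add (dvd_trans (pow_dvd_pow π ha₁μ) hdiv) (pow_dvd_pow π ha₁q)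
    · have hdig : ∀ i, i ≤ N → N < μ + i → s i = t2 i := by
        intro i hiN hNμ
        by_cases hik : i = k
        · subst hik; simp [ht2def, h1]
        · rw [hz i ((hMi i).mpr hNμ) hik, ht2def]; simp [hik]
      have hdiv := hD2.mpr hdig
      refine ⟨?_, Or.inr hdiv⟩
      have e1 : A = (A + π ^ q) - π ^ q := by ring
      rw [e1]
      exact dvd_sub (dvd_trans (pow_dvd_pow π ha₁μ) hdiv) (pow_dvd_pow π ha₁q)
end

section
/- Let L be a quadratic 𝔬-lattice of rank n, p odd, with Gram matrix diag(u₁,…,u_{n−2}, π^{d₁}v₁, π^{d₂}v₂), u_i, v_j ∈ 𝔬×, 0 ≤ d₁ ≤ d₂. For 0 ≤ b < d₁/2, the number of integral overlattices L' ⊇ L with [L':L] = b and with L'⊗κ having nondegenerate part of dimension exactly n−1 is zero; i.e. 𝒮_{(L,(n−1)^±,b)} = ∅ for b < d₁/2. -/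
open Matrix

set_option maxHeartbeats 2000000 in
/-- for `0 ≤ b < d₁/2` and `L` with Gram matrix
`diag(u₁,…,u_{n−2},π^{d₁}v₁,π^{d₂}v₂)` (`p` odd), there is no integral overlattice
`L' ⊇ L` with `[L':L] = b` whose reduction `L'⊗κ` has nondegenerate part of
dimension exactly `n−1`; formalized via `L' = X·𝔬ⁿ`: there is no `X ∈ GL_n(F)` with
`X⁻¹` integral, `det X = (unit)·π^{−b}`, and `XᵀBX` equal to the image of a matrix
`C` over `𝔬` whose reduction modulo the maximal ideal has rank `n−1`. -/
theorem stmt19 {𝔬 : Type*} [CommRing 𝔬] [IsDomain 𝔬] [IsDiscreteValuationRing 𝔬]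
    {F : Type*} [Field F] [Algebra 𝔬 F] [IsFractionRing 𝔬 F]
    (π : 𝔬) (hπ : Irreducible π) (πF : F) (hπF : πF = algebraMap 𝔬 F π)
    (O : Subring F) (hO : (O : Set F) = Set.range (algebraMap 𝔬 F))
    (p : ℕ) (hp : p.Prime) (hp2 : p ≠ 2) [CharP (IsLocalRing.ResidueField 𝔬) p]
    (n : ℕ) (u : Fin n → 𝔬ˣ) (v₁ v₂ : 𝔬ˣ)
    (d₁ d₂ : ℕ) (hd : d₁ ≤ d₂) (b : ℕ) (hb : 2 * b < d₁)
    (B : Matrix (Fin (n + 2)) (Fin (n + 2)) F)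
    (hB : B = Matrix.diagonal (fun i : Fin (n + 2) =>
      if h : (i : ℕ) < n then algebraMap 𝔬 F (u ⟨i, h⟩ : 𝔬)
      else if (i : ℕ) = n then πF ^ d₁ * algebraMap 𝔬 F (v₁ : 𝔬)
      else πF ^ d₂ * algebraMap 𝔬 F (v₂ : 𝔬))) :
    ¬ ∃ (X : Matrix (Fin (n + 2)) (Fin (n + 2)) F)
        (C : Matrix (Fin (n + 2)) (Fin (n + 2)) 𝔬),
        (∀ i j, X⁻¹ i j ∈ O) ∧
        (∃ w : 𝔬ˣ, X.det = algebraMap 𝔬 F (w : 𝔬) * πF ^ (-(b : ℤ))) ∧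
        C.map (algebraMap 𝔬 F) = X.transpose * B * X ∧
        (C.map (IsLocalRing.residue 𝔬)).rank = n + 1 := by
  rintro ⟨X, C, hXinv, ⟨w, hdet⟩, hC, hrank⟩
  set φ := algebraMap 𝔬 F with hφ
  have inj : Function.Injective φ := IsFractionRing.injective 𝔬 F
  have hπ0 : π ≠ 0 := hπ.ne_zero
  have hπF0 : πF ≠ 0 := by
    rw [hπF]
    intro h
    exact hπ0 (inj (by simpa using h))
  have hπFb0 : πF ^ b ≠ 0 := pow_ne_zero _ hπF0
  rw [_root_.zpow_neg, zpow_natCast] at hdet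
  have hw0 : φ (w : 𝔬) ≠ 0 := by
    intro h
    exact w.ne_zero (inj (by simpa using h))
  have hdetX0 : X.det ≠ 0 := by
    rw [hdet]
    exact mul_ne_zero hw0 (inv_ne_zero hπFb0)
  have hXunit : IsUnit X.det := isUnit_iff_ne_zero.mpr hdetX0
  have hXX : X * X⁻¹ = 1 := Matrix.mul_nonsing_inv X hXunit
  have hX'X : X⁻¹ * X = 1 := Matrix.nonsing_inv_mul X hXunit
  -- lift X⁻¹ to a matrix over 𝔬
  have hlift : ∀ i j, ∃ m : 𝔬, φ m = X⁻¹ i j := by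
    intro i j
    have := hXinv i j
    have h2 : X⁻¹ i j ∈ (O : Set F) := this
    rw [hO] at h2
    obtain ⟨m, hm⟩ := h2
    exact ⟨m, hm⟩
  choose M0 hM0 using hlift
  set Mat : Matrix (Fin (n + 2)) (Fin (n + 2)) 𝔬 := Matrix.of M0 with hMatdef
  have hMat : Mat.map φ = X⁻¹ := by
    ext i j
    exact hM0 i j
  -- determinant of Mat
  have hdetMat : Mat.det = ((w⁻¹ : 𝔬ˣ) : 𝔬) * π ^ b := by
    apply inj
    have h1 : φ Mat.det = (X⁻¹).det := by rw [← hMat, RingHom.map_det, RingHom.mapMatrix_apply]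
    have h2 : (X⁻¹).det * X.det = 1 := Matrix.det_nonsing_inv_mul_det X hXunit
    have h3 : φ (((w⁻¹ : 𝔬ˣ) : 𝔬) * π ^ b) * X.det = 1 := by
      rw [hdet, _root_.map_mul, map_pow, ← hπF]
      have hw : φ ((w⁻¹ : 𝔬ˣ) : 𝔬) * φ ((w : 𝔬ˣ) : 𝔬) = 1 := by
        rw [← _root_.map_mul]
        norm_cast
        rw [inv_mul_cancel, Units.val_one, _root_.map_one]
      have hrearr : φ ((w⁻¹ : 𝔬ˣ) : 𝔬) * πF ^ b * (φ ((w : 𝔬ˣ) : 𝔬) * (πF ^ b)⁻¹) =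
          (φ ((w⁻¹ : 𝔬ˣ) : 𝔬) * φ ((w : 𝔬ˣ) : 𝔬)) * (πF ^ b * (πF ^ b)⁻¹) := by ring
      rw [hrearr, hw, mul_inv_cancel₀ hπFb0, one_mul]
    rw [h1]
    have := mul_right_cancel₀ hdetX0 (h2.trans h3.symm)
    exact this
  -- the matrix Y with map Y = π^b • X
  set Y : Matrix (Fin (n + 2)) (Fin (n + 2)) 𝔬 := ((w : 𝔬ˣ) : 𝔬) • Mat.adjugate with hYdef
  have hYM : Y * Mat = (π ^ b) • (1 : Matrix (Fin (n + 2)) (Fin (n + 2)) 𝔬) := by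
    rw [hYdef, Matrix.smul_mul, Matrix.adjugate_mul, hdetMat, smul_smul,
      ← mul_assoc, Units.mul_inv, one_mul]
  have hMY : Mat * Y = (π ^ b) • (1 : Matrix (Fin (n + 2)) (Fin (n + 2)) 𝔬) := by
    rw [hYdef, Matrix.mul_smul, Matrix.mul_adjugate, hdetMat, smul_smul,
      ← mul_assoc, Units.mul_inv, one_mul]
  have hsmulmap : ∀ (a : 𝔬) (A : Matrix (Fin (n + 2)) (Fin (n + 2)) 𝔬),
      (a • A).map φ = φ a • A.map φ := by
    intro a A
    ext i j
    simp [Matrix.map_apply, Matrix.smul_apply, smul_eq_mul, _root_.map_mul]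
  have hmapY : Y.map φ = (πF ^ b) • X := by
    have h1 : Y.map φ * X⁻¹ = (πF ^ b) • 1 := by
      rw [← hMat, ← Matrix.map_mul, hYM, hsmulmap, map_pow, Matrix.map_one φ (map_zero φ) (map_one φ), hπF]
    calc Y.map φ = Y.map φ * (X⁻¹ * X) := by rw [hX'X, Matrix.mul_one]
    _ = (Y.map φ * X⁻¹) * X := by rw [Matrix.mul_assoc]
    _ = ((πF ^ b) • 1) * X := by rw [h1]
    _ = (πF ^ b) • X := by rw [Matrix.smul_mul, Matrix.one_mul]
  -- the integral Gram matrix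
  set B₀ : Matrix (Fin (n + 2)) (Fin (n + 2)) 𝔬 := Matrix.diagonal (fun i : Fin (n + 2) =>
      if h : (i : ℕ) < n then ((u ⟨i, h⟩ : 𝔬ˣ) : 𝔬)
      else if (i : ℕ) = n then π ^ d₁ * ((v₁ : 𝔬ˣ) : 𝔬)
      else π ^ d₂ * ((v₂ : 𝔬ˣ) : 𝔬)) with hB₀def
  have hB₀ : B₀.map φ = B := by
    have hfun : ∀ i : Fin (n + 2), φ (if h : (i : ℕ) < n then ((u ⟨i, h⟩ : 𝔬ˣ) : 𝔬)
        else if (i : ℕ) = n then π ^ d₁ * ((v₁ : 𝔬ˣ) : 𝔬) else π ^ d₂ * ((v₂ : 𝔬ˣ) : 𝔬)) =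
        (if h : (i : ℕ) < n then φ ((u ⟨i, h⟩ : 𝔬ˣ) : 𝔬)
        else if (i : ℕ) = n then πF ^ d₁ * φ ((v₁ : 𝔬ˣ) : 𝔬)
        else πF ^ d₂ * φ ((v₂ : 𝔬ˣ) : 𝔬)) := by
      intro i
      by_cases h : (i : ℕ) < n
      · simp [h]
      · by_cases h2 : (i : ℕ) = n
        · simp [h, h2, _root_.map_mul, map_pow, hπF]
        · simp [h, h2, _root_.map_mul, map_pow, hπF]
    rw [hB, hB₀def, Matrix.diagonal_map (map_zero φ)]
    ext i j
    by_cases hij : i = j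
    · subst hij
      simp only [Matrix.diagonal_apply_eq, Function.comp_apply]
      exact hfun i
    · simp [Matrix.diagonal_apply_ne _ hij]
  have injM : Function.Injective
      (fun A : Matrix (Fin (n + 2)) (Fin (n + 2)) 𝔬 => A.map φ) := by
    intro A A' h
    ext i j
    exact inj (congrFun (congrFun (congrArg Matrix.of h) i) j)
  -- key identity over 𝔬
  have hKey : Yᵀ * B₀ * Y = (π ^ (2 * b)) • C := by
    apply injM
    show (Yᵀ * B₀ * Y).map φ = ((π ^ (2 * b)) • C).map φ
    rw [Matrix.map_mul, Matrix.map_mul, Matrix.transpose_map, hmapY, hB₀,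
      hsmulmap, map_pow, ← hπF, hC]
    rw [Matrix.transpose_smul, Matrix.smul_mul, Matrix.smul_mul, Matrix.mul_smul,
      smul_smul, ← pow_add, two_mul]
  -- indices
  set j₀ : Fin (n + 2) := ⟨n, by omega⟩ with hj₀def
  set j₁ : Fin (n + 2) := ⟨n + 1, by omega⟩ with hj₁def
  have hj01 : j₀ ≠ j₁ := by
    intro h
    have := congrArg Fin.val h
    simp [hj₀def, hj₁def] at this
  -- the kernel submodule
  have hcast : n ≤ n + 2 := by omega
  set Z : Matrix (Fin n) (Fin (n + 2)) 𝔬 := Y.submatrix (Fin.castLE hcast) id with hZdef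
  set K : Submodule 𝔬 (Fin (n + 2) → 𝔬) := LinearMap.ker Z.mulVecLin with hKdef
  have hZmul : ∀ c : Fin (n + 2) → 𝔬, Z *ᵥ c = fun i : Fin n => (Y *ᵥ c) (Fin.castLE hcast i) := by
    intro c
    funext i
    simp [hZdef, Matrix.mulVec, Matrix.submatrix, dotProduct]
  have hmemK : ∀ c : Fin (n + 2) → 𝔬, c ∈ K ↔
      ∀ i : Fin n, (Y *ᵥ c) (Fin.castLE hcast i) = 0 := by
    intro c
    rw [hKdef, LinearMap.mem_ker, Matrix.mulVecLin_apply, hZmul, funext_iff]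
    simp
  -- the two columns of Mat
  set m0 : Fin (n + 2) → 𝔬 := fun i => Mat i j₀ with hm0def
  set m1 : Fin (n + 2) → 𝔬 := fun i => Mat i j₁ with hm1def
  have hYcol : ∀ j : Fin (n + 2), Y *ᵥ (fun i => Mat i j) =
      fun i => (π ^ b) * (1 : Matrix (Fin (n + 2)) (Fin (n + 2)) 𝔬) i j := by
    intro j
    funext i
    have : (Y * Mat) i j = ((π ^ b) • (1 : Matrix (Fin (n + 2)) (Fin (n + 2)) 𝔬)) i j := by
      rw [hYM]
    simpa [Matrix.mul_apply, Matrix.mulVec, dotProduct] using this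
  have hm0K : m0 ∈ K := by
    rw [hmemK]
    intro i
    rw [hm0def, hYcol j₀]
    have : (Fin.castLE hcast i) ≠ j₀ := by
      intro h
      have := congrArg Fin.val h
      simp [hj₀def] at this
      omega
    simp [Matrix.one_apply_ne this]
  have hm1K : m1 ∈ K := by
    rw [hmemK]
    intro i
    rw [hm1def, hYcol j₁]
    have : (Fin.castLE hcast i) ≠ j₁ := by
      intro h
      have := congrArg Fin.val h
      simp [hj₁def] at this
      omega
    simp [Matrix.one_apply_ne this]
  -- Smith normal form
  obtain ⟨r, bM, bN, f, a, hsnf⟩ := K.smithNormalForm (Pi.basisFun 𝔬 (Fin (n + 2)))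
  haveI : Module.Finite 𝔬 K := by
    infer_instance
  have hπb0 : (π : 𝔬) ^ b ≠ 0 := pow_ne_zero _ hπ0
  -- rank of K is at least 2
  have hr2 : 2 ≤ r := by
    have hpair : LinearIndependent 𝔬 ![(⟨m0, hm0K⟩ : K), ⟨m1, hm1K⟩] := by
      rw [LinearIndependent.pair_iff]
      intro s t hst
      have hamb : s • m0 + t • m1 = 0 := by
        have := congrArg (Subtype.val) hst
        simpa using this
      have h1 : Y *ᵥ (s • m0 + t • m1) = 0 := by rw [hamb, Matrix.mulVec_zero]
      rw [Matrix.mulVec_add, Matrix.mulVec_smul, Matrix.mulVec_smul, hm0def, hm1def,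
        hYcol j₀, hYcol j₁] at h1
      constructor
      · have h := congrFun h1 j₀
        simp only [Pi.add_apply, Pi.smul_apply, smul_eq_mul, Pi.zero_apply,
          Matrix.one_apply_eq, Matrix.one_apply_ne hj01, mul_zero, mul_one, add_zero] at h
        exact (mul_eq_zero.mp h).resolve_right hπb0
      · have h := congrFun h1 j₁
        simp only [Pi.add_apply, Pi.smul_apply, smul_eq_mul, Pi.zero_apply,
          Matrix.one_apply_eq, Matrix.one_apply_ne (Ne.symm hj01), mul_zero, mul_one, zero_add] at h
        exact (mul_eq_zero.mp h).resolve_right hπb0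
    have hcard := hpair.fintype_card_le_finrank
    rw [Module.finrank_eq_card_basis bN] at hcard
    simpa using hcard
  set i0 : Fin r := ⟨0, by omega⟩ with hi0def
  set i1 : Fin r := ⟨1, by omega⟩ with hi1def
  have hi01 : i0 ≠ i1 := by
    intro h
    have := congrArg Fin.val h
    simp [hi0def, hi1def] at this
  -- basis vectors lie in K
  have ha0 : ∀ i : Fin r, a i ≠ 0 := by
    intro i h
    have hzero : (bN i : Fin (n + 2) → 𝔬) = 0 := by
      rw [hsnf i, h, zero_smul]
    exact bN.ne_zero i (by exact_mod_cast Subtype.ext hzero)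
  have hvK : ∀ i : Fin r, (bM (f i) : Fin (n + 2) → 𝔬) ∈ K := by
    intro i
    have hmem : a i • (bM (f i) : Fin (n + 2) → 𝔬) ∈ K := by
      rw [← hsnf i]
      exact (bN i).2
    rw [hmemK] at hmem ⊢
    intro i'
    have := hmem i'
    rw [Matrix.mulVec_smul] at this
    simp only [Pi.smul_apply, smul_eq_mul] at this
    rcases mul_eq_zero.mp this with h | h
    · exact absurd h (ha0 i)
    · exact h
  -- residue map facts
  have hresπ : IsLocalRing.residue 𝔬 π = 0 :=
    Ideal.Quotient.eq_zero_iff_mem.mpr (IsLocalRing.mem_maximalIdeal π |>.mpr hπ.not_isUnit)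
  -- elements of K are annihilated by C mod π
  have hCK : ∀ x : Fin (n + 2) → 𝔬, x ∈ K → ∀ i, IsLocalRing.residue 𝔬 ((C *ᵥ x) i) = 0 := by
    intro x hx i
    have hyv : ∀ i : Fin n, (Y *ᵥ x) (Fin.castLE hcast i) = 0 := (hmemK x).mp hx
    obtain ⟨z, hz⟩ : ∃ z : Fin (n + 2) → 𝔬, B₀ *ᵥ (Y *ᵥ x) = (π ^ d₁) • z := by
      refine ⟨fun k =>
        if k = j₀ then ((v₁ : 𝔬ˣ) : 𝔬) * (Y *ᵥ x) j₀
        else if k = j₁ then π ^ (d₂ - d₁) * ((v₂ : 𝔬ˣ) : 𝔬) * (Y *ᵥ x) j₁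
        else 0, ?_⟩
      funext k
      rw [hB₀def, Matrix.mulVec_diagonal]
      by_cases h : (k : ℕ) < n
      · have hk0 : k ≠ j₀ := by
          intro hh; have := congrArg Fin.val hh; simp [hj₀def] at this; omega
        have hk1 : k ≠ j₁ := by
          intro hh; have := congrArg Fin.val hh; simp [hj₁def] at this; omega
        have hyk : (Y *ᵥ x) k = 0 := by
          have hkk : k = Fin.castLE hcast ⟨(k : ℕ), h⟩ := by
            apply Fin.ext; simp
          rw [hkk]
          exact hyv _
        simp [h, hk0, hk1, hyk]
      · by_cases h2 : (k : ℕ) = n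
        · have hk0 : k = j₀ := by apply Fin.ext; simpa [hj₀def] using h2
          simp only [hk0]
          simp [hj₀def, Pi.smul_apply, smul_eq_mul]
          ring
        · have hk1 : k = j₁ := by
            apply Fin.ext
            have : (k : ℕ) < n + 2 := k.isLt
            simp [hj₁def]
            omega
          simp only [hk1]
          have hlt : ¬ ((j₁ : ℕ) < n) := by rw [hj₁def]; show ¬ (n + 1 < n); omega
          have h3 : ¬ ((j₁ : ℕ) = n) := by rw [hj₁def]; show ¬ (n + 1 = n); omega
          have hdd : π ^ d₁ * π ^ (d₂ - d₁) = π ^ d₂ := by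
            rw [← pow_add]
            congr 1
            omega
          simp only [Pi.smul_apply, smul_eq_mul, if_neg (Ne.symm hj01),
            dif_neg hlt, if_neg h3, if_pos rfl, if_true]
          rw [← hdd]
          ring
    have hCx : (π ^ (2 * b)) • (C *ᵥ x) = (π ^ d₁) • (Yᵀ *ᵥ z) := by
      have h1 : ((π ^ (2 * b)) • C) *ᵥ x = (Yᵀ * B₀ * Y) *ᵥ x := by rw [hKey]
      rw [Matrix.smul_mulVec] at h1
      rw [h1, ← Matrix.mulVec_mulVec, ← Matrix.mulVec_mulVec, hz,
        Matrix.mulVec_smul]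
    have hent : (C *ᵥ x) i = π ^ (d₁ - 2 * b) * (Yᵀ *ᵥ z) i := by
      have hcf := congrFun hCx i
      simp only [Pi.smul_apply, smul_eq_mul] at hcf
      have hd₁ : d₁ = 2 * b + (d₁ - 2 * b) := by omega
      rw [hd₁, pow_add, mul_assoc] at hcf
      exact mul_left_cancel₀ (pow_ne_zero _ hπ0) hcf
    rw [hent, _root_.map_mul, map_pow, hresπ, zero_pow (by omega), zero_mul]
  -- reduction of matrix-vector products
  have hmapmulVec : ∀ (x : Fin (n + 2) → 𝔬),
      (C.map (IsLocalRing.residue 𝔬)) *ᵥ (fun i => IsLocalRing.residue 𝔬 (x i)) =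
        fun i => IsLocalRing.residue 𝔬 ((C *ᵥ x) i) := by
    intro x
    funext i
    simp [Matrix.mulVec, dotProduct, Matrix.map_apply, map_sum]
  have hkerv : ∀ i : Fin r, (C.map (IsLocalRing.residue 𝔬)) *ᵥ
      (fun k => IsLocalRing.residue 𝔬 (bM (f i) k)) = 0 := by
    intro i
    rw [hmapmulVec]
    funext k
    exact hCK _ (hvK i) k
  -- independence of the reductions of the two basis vectors
  have hfi01 : f i0 ≠ f i1 := fun h => hi01 (f.injective h)
  have hindep : LinearIndependent (IsLocalRing.ResidueField 𝔬)
      ![fun k => IsLocalRing.residue 𝔬 (bM (f i0) k),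
        fun k => IsLocalRing.residue 𝔬 (bM (f i1) k)] := by
    rw [LinearIndependent.pair_iff]
    intro s t hst
    have hPdef : ∃ P : Matrix (Fin (n + 2)) (Fin (n + 2)) 𝔬,
        (∃ Q, Q * P = 1 ∧ P * Q = 1) ∧ ∀ i j, P i j = bM j i := by
      refine ⟨(Pi.basisFun 𝔬 (Fin (n + 2))).toMatrix ⇑bM, ?_, ?_⟩
      · haveI := (Pi.basisFun 𝔬 (Fin (n + 2))).invertibleToMatrix bM
        exact ⟨⅟((Pi.basisFun 𝔬 (Fin (n + 2))).toMatrix ⇑bM), invOf_mul_self _, mul_invOf_self _⟩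
      · intro i j
        rw [Module.Basis.toMatrix_apply, Pi.basisFun_repr]
    obtain ⟨P, ⟨Q, hQP, hPQ⟩, hPentry⟩ := hPdef
    have hQPb : (Q.map (IsLocalRing.residue 𝔬)) * (P.map (IsLocalRing.residue 𝔬)) = 1 := by
      rw [← Matrix.map_mul, hQP,
        Matrix.map_one _ (map_zero (IsLocalRing.residue 𝔬)) (_root_.map_one (IsLocalRing.residue 𝔬))]
    obtain ⟨c, hcdef⟩ : ∃ c : Fin (n + 2) → IsLocalRing.ResidueField 𝔬,
        c = s • (Pi.single (f i0) 1 : Fin (n + 2) → IsLocalRing.ResidueField 𝔬)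
          + t • (Pi.single (f i1) 1 : Fin (n + 2) → IsLocalRing.ResidueField 𝔬) := ⟨_, rfl⟩
    have hPbc : (P.map (IsLocalRing.residue 𝔬)) *ᵥ c = 0 := by
      rw [hcdef, Matrix.mulVec_add, Matrix.mulVec_smul, Matrix.mulVec_smul,
        Matrix.mulVec_single, Matrix.mulVec_single]
      rw [← hst]
      congr 1
      · congr 1
        funext i
        simp [Matrix.map_apply, hPentry]
      · congr 1
        funext i
        simp [Matrix.map_apply, hPentry]
    have hc0 : c = 0 := by
      calc c = (1 : Matrix _ _ _) *ᵥ c := by rw [Matrix.one_mulVec]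
      _ = ((Q.map (IsLocalRing.residue 𝔬)) * (P.map (IsLocalRing.residue 𝔬))) *ᵥ c := by
          rw [hQPb]
      _ = (Q.map (IsLocalRing.residue 𝔬)) *ᵥ ((P.map (IsLocalRing.residue 𝔬)) *ᵥ c) := by
          rw [Matrix.mulVec_mulVec]
      _ = 0 := by rw [hPbc, Matrix.mulVec_zero]
    constructor
    · have := congrFun hc0 (f i0)
      simpa [hcdef, Pi.single_apply, hfi01, Ne.symm hfi01] using this
    · have := congrFun hc0 (f i1)
      simpa [hcdef, Pi.single_apply, hfi01, Ne.symm hfi01] using this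
  -- conclude via rank-nullity
  have hW2 : 2 ≤ Module.finrank (IsLocalRing.ResidueField 𝔬)
      (LinearMap.ker (C.map (IsLocalRing.residue 𝔬)).mulVecLin) := by
    have hmem : ∀ i : Fin r, (fun k => IsLocalRing.residue 𝔬 (bM (f i) k)) ∈
        LinearMap.ker (C.map (IsLocalRing.residue 𝔬)).mulVecLin := by
      intro i
      rw [LinearMap.mem_ker, Matrix.mulVecLin_apply]
      exact hkerv i
    have hpairW : LinearIndependent (IsLocalRing.ResidueField 𝔬)
        ![(⟨_, hmem i0⟩ : LinearMap.ker (C.map (IsLocalRing.residue 𝔬)).mulVecLin),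
          ⟨_, hmem i1⟩] := by
      rw [LinearIndependent.pair_iff]
      intro s t hst
      have hamb : s • (fun k => IsLocalRing.residue 𝔬 (bM (f i0) k)) +
          t • (fun k => IsLocalRing.residue 𝔬 (bM (f i1) k)) = 0 := by
        have := congrArg (Subtype.val) hst
        simpa using this
      exact (LinearIndependent.pair_iff.mp hindep) s t hamb
    have := hpairW.fintype_card_le_finrank
    simpa using this
  have hrn := LinearMap.finrank_range_add_finrank_ker (C.map (IsLocalRing.residue 𝔬)).mulVecLin
  have hrange : Module.finrank (IsLocalRing.ResidueField 𝔬)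
      (LinearMap.range (C.map (IsLocalRing.residue 𝔬)).mulVecLin) = n + 1 := hrank
  rw [hrange, Module.finrank_fintype_fun_eq_card] at hrn
  simp only [Fintype.card_fin] at hrn
  omega
end
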